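/- Let 𝔯 ⊆ [0,1] ∩ ℚ be a finite set with 0, 1 ∈ 𝔯 and let 𝒩 be a finite set of positive integers. Define 𝔯'' := {r − Σ_{n∈𝒩} m_n/(n+1) : r ∈ 𝔯, m_n nonnegative integers} ∩ [0,1]. Then 𝔯'' is a finite subset of [0,1] ∩ ℚ and Γ(𝒩, Φ(𝔯)) = Φ(𝔯''); in particular Γ(𝒩, Φ(𝔯)) is itself a hyperstandard set. -/

import Mathlib

open scoped BigOperators

/-- The hyperstandard set `Φ(𝔯) = {1 - r/l | r ∈ 𝔯, l ∈ ℤ_{>0}} ∩ [0,1]` associated to a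
set of rationals `𝔯`. -/
def Phi (R : Set ℚ) : Set ℝ :=
  {x : ℝ | (∃ r ∈ R, ∃ l : ℕ, 0 < l ∧ x = 1 - (r : ℝ) / l) ∧ 0 ≤ x ∧ x ≤ 1}

/-- The set `Γ(𝒩, Φ(𝔯)) = {1 - r/l + (1/l)·Σ_{n∈𝒩} m_n/(n+1)} ∩ [0,1]`. -/
def Gamma (N : Finset ℕ) (R : Set ℚ) : Set ℝ :=
  {x : ℝ | (∃ r ∈ R, ∃ l : ℕ, 0 < l ∧ ∃ m : ℕ → ℕ,
      x = 1 - (r : ℝ) / l + (1 / (l : ℝ)) * ∑ n ∈ N, (m n : ℝ) / ((n : ℝ) + 1)) ∧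
    0 ≤ x ∧ x ≤ 1}

/-- With `𝔯'' := {r − Σ_{n∈𝒩} m_n/(n+1) : r ∈ 𝔯, m_n ∈ ℤ_{≥0}} ∩ [0,1]`,
the set `𝔯''` is a finite subset of `[0,1] ∩ ℚ` and `Γ(𝒩, Φ(𝔯)) = Φ(𝔯'')`;
in particular `Γ(𝒩, Φ(𝔯))` is a hyperstandard set. -/
theorem stmt4 (R : Set ℚ) (hRfin : R.Finite) (hRsub : R ⊆ Set.Icc 0 1)
    (h0R : (0 : ℚ) ∈ R) (h1R : (1 : ℚ) ∈ R)
    (N : Finset ℕ) (hN : ∀ n ∈ N, 0 < n)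
    (R'' : Set ℚ)
    (hR'' : R'' = {x : ℚ | (∃ r ∈ R, ∃ m : ℕ → ℕ,
      x = r - ∑ n ∈ N, (m n : ℚ) / ((n : ℚ) + 1)) ∧ 0 ≤ x ∧ x ≤ 1}) :
    R''.Finite ∧ R'' ⊆ Set.Icc 0 1 ∧ Gamma N R = Phi R'' ∧
      ∃ R₀ : Set ℚ, R₀.Finite ∧ R₀ ⊆ Set.Icc 0 1 ∧ Gamma N R = Phi R₀ := by
  subst hR''
  set S : Set (ℕ → ℕ) := {m | (∀ n ∈ N, m n ≤ n + 1) ∧ ∀ n ∉ N, m n = 0} with hS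
  have hSfin : S.Finite := by
    have hinj : Set.InjOn (fun (m : ℕ → ℕ) (n : N) => m n) S := by
      intro a ha b hb hab
      funext n
      by_cases hn : n ∈ N
      · exact congrFun hab ⟨n, hn⟩
      · rw [ha.2 n hn, hb.2 n hn]
    apply Set.Finite.of_finite_image _ hinj
    apply Set.Finite.subset (Set.Finite.pi (fun i : N => Set.finite_Iic (i.1 + 1)))
    rintro _ ⟨m, hm, rfl⟩
    rw [Set.mem_univ_pi]
    intro n
    exact hm.1 n n.2
  have hfin : {x : ℚ | (∃ r ∈ R, ∃ m : ℕ → ℕ,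
      x = r - ∑ n ∈ N, (m n : ℚ) / ((n : ℚ) + 1)) ∧ 0 ≤ x ∧ x ≤ 1}.Finite := by
    apply Set.Finite.subset (Set.Finite.image
      (fun p : ℚ × (ℕ → ℕ) => p.1 - ∑ n ∈ N, (p.2 n : ℚ) / ((n : ℚ) + 1))
      (hRfin.prod hSfin))
    rintro x ⟨⟨r, hr, m, rfl⟩, hx0, hx1⟩
    have hterm : ∀ n ∈ N, (0:ℚ) ≤ (m n : ℚ) / ((n : ℚ) + 1) := by
      intro n _
      positivity
    have hsum : ∑ n ∈ N, (m n : ℚ) / ((n : ℚ) + 1) ≤ 1 := by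
      have hr1 := (hRsub hr).2
      linarith
    have hbound : ∀ n ∈ N, m n ≤ n + 1 := by
      intro n hn
      have h1 : (m n : ℚ) / ((n : ℚ) + 1) ≤ 1 :=
        le_trans (Finset.single_le_sum hterm hn) hsum
      have hpos : (0:ℚ) < (n : ℚ) + 1 := by positivity
      rw [div_le_one hpos] at h1
      exact_mod_cast h1
    refine ⟨(r, fun n => if n ∈ N then m n else 0), ⟨hr, ?_, ?_⟩, ?_⟩
    · intro n hn; simp [hn, hbound n hn]
    · intro n hn; simp [hn]
    · simp only
      congr 1
      apply Finset.sum_congr rfl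
      intro n hn
      simp [hn]
  have heq : Gamma N R = Phi {x : ℚ | (∃ r ∈ R, ∃ m : ℕ → ℕ,
      x = r - ∑ n ∈ N, (m n : ℚ) / ((n : ℚ) + 1)) ∧ 0 ≤ x ∧ x ≤ 1} := by
    ext x
    constructor
    · rintro ⟨⟨r, hr, l, hl, m, rfl⟩, hx0, hx1⟩
      have hl0 : (l : ℝ) ≠ 0 := Nat.cast_ne_zero.mpr hl.ne'
      have hlpos : (0:ℝ) < (l : ℝ) := Nat.cast_pos.mpr hl
      set s : ℚ := r - ∑ n ∈ N, (m n : ℚ) / ((n : ℚ) + 1) with hs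
      have hcast : (s : ℝ) = (r : ℝ) - ∑ n ∈ N, (m n : ℝ) / ((n : ℝ) + 1) := by
        push_cast [hs]; ring
      have hxeq : 1 - (r : ℝ) / l + (1 / (l : ℝ)) * ∑ n ∈ N, (m n : ℝ) / ((n : ℝ) + 1)
          = 1 - (s : ℝ) / l := by
        rw [hcast]; field_simp; ring
      have hs0 : (0:ℚ) ≤ s := by
        have : (0:ℝ) ≤ (s : ℝ) := by
          by_contra h
          push_neg at h
          have : (1:ℝ) < 1 - (s:ℝ)/l := by
            have : (s:ℝ)/l < 0 := div_neg_of_neg_of_pos h hlpos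
            linarith
          rw [← hxeq] at this
          linarith
        exact_mod_cast this
      have hs1 : s ≤ 1 := by
        have hsumQ : (0:ℚ) ≤ ∑ n ∈ N, (m n : ℚ) / ((n : ℚ) + 1) :=
          Finset.sum_nonneg (fun n _ => by positivity)
        have := (hRsub hr).2
        rw [hs]; linarith
      refine ⟨⟨s, ⟨⟨r, hr, m, hs⟩, hs0, hs1⟩, l, hl, ?_⟩, hx0, hx1⟩
      exact hxeq
    · rintro ⟨⟨s, ⟨⟨r, hr, m, hsm⟩, hs0, hs1⟩, l, hl, rfl⟩, hx0, hx1⟩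
      have hl0 : (l : ℝ) ≠ 0 := Nat.cast_ne_zero.mpr hl.ne'
      have hcast : (s : ℝ) = (r : ℝ) - ∑ n ∈ N, (m n : ℝ) / ((n : ℝ) + 1) := by
        rw [hsm]; push_cast; ring
      refine ⟨⟨r, hr, l, hl, m, ?_⟩, hx0, hx1⟩
      rw [hcast]; field_simp; ring
  exact ⟨hfin, fun x hx => ⟨hx.2.1, hx.2.2⟩, heq,
    _, hfin, fun x hx => ⟨hx.2.1, hx.2.2⟩, heq⟩
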